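/- For every squarefree integer d ≥ 1, Σ_{a ∈ (ℤ/dℤ)^×} 1/gcd(ã − 1, d) = φ(d)²/d, as an identity of rational numbers, where for a unit a of ℤ/dℤ, ã − 1 denotes any integer representative of a − 1 ∈ ℤ/dℤ (the gcd with d is independent of the choice of representative). -/

import Mathlib

private lemma gcd_val_chinese {m n : ℕ} [NeZero m] [NeZero n] (h : Nat.Coprime m n)
    (x : ZMod (m * n)) :
    Nat.gcd x.val (m * n) =
      Nat.gcd ((ZMod.chineseRemainder h x).1.val) m *
        Nat.gcd ((ZMod.chineseRemainder h x).2.val) n := by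
  have h1 : (ZMod.chineseRemainder h x).1 = ((x.val : ℕ) : ZMod m) := by
    have e : ZMod.chineseRemainder h x = ZMod.castHom
        (show Nat.lcm m n ∣ m * n by simp [Nat.lcm_dvd_iff]) (ZMod m × ZMod n) x := rfl
    rw [e, ZMod.castHom_apply, ← ZMod.natCast_val x, Prod.fst_natCast]
  have h2 : (ZMod.chineseRemainder h x).2 = ((x.val : ℕ) : ZMod n) := by
    have e : ZMod.chineseRemainder h x = ZMod.castHom
        (show Nat.lcm m n ∣ m * n by simp [Nat.lcm_dvd_iff]) (ZMod m × ZMod n) x := rfl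
    rw [e, ZMod.castHom_apply, ← ZMod.natCast_val x, Prod.snd_natCast]
  rw [h1, h2, ZMod.val_natCast, ZMod.val_natCast, Nat.Coprime.gcd_mul x.val h]
  congr 1
  · rw [Nat.gcd_comm, Nat.gcd_rec, Nat.gcd_comm]
  · rw [Nat.gcd_comm, Nat.gcd_rec, Nat.gcd_comm]

private lemma sum_coprime (m n : ℕ) [NeZero m] [NeZero n] (h : Nat.Coprime m n) :
    ∑ a : (ZMod (m * n))ˣ, (1 : ℚ) / (Nat.gcd (((a : ZMod (m * n)) - 1).val) (m * n) : ℚ) =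
      (∑ a : (ZMod m)ˣ, (1 : ℚ) / (Nat.gcd (((a : ZMod m) - 1).val) m : ℚ)) *
      (∑ a : (ZMod n)ˣ, (1 : ℚ) / (Nat.gcd (((a : ZMod n) - 1).val) n : ℚ)) := by
  haveI : NeZero (m * n) := ⟨mul_ne_zero (NeZero.ne m) (NeZero.ne n)⟩
  let e : (ZMod (m * n))ˣ ≃* (ZMod m)ˣ × (ZMod n)ˣ :=
    (Units.mapEquiv (ZMod.chineseRemainder h).toMulEquiv).trans MulEquiv.prodUnits
  have key : ∀ a : (ZMod (m * n))ˣ,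
      (1 : ℚ) / (Nat.gcd (((a : ZMod (m * n)) - 1).val) (m * n) : ℚ) =
      ((1 : ℚ) / (Nat.gcd ((((e a).1 : ZMod m) - 1).val) m : ℚ)) *
      ((1 : ℚ) / (Nat.gcd ((((e a).2 : ZMod n) - 1).val) n : ℚ)) := by
    intro a
    have e1 : ((e a).1 : ZMod m) = (ZMod.chineseRemainder h (a : ZMod (m * n))).1 := rfl
    have e2 : ((e a).2 : ZMod n) = (ZMod.chineseRemainder h (a : ZMod (m * n))).2 := rfl
    have hsub1 : ((e a).1 : ZMod m) - 1
        = (ZMod.chineseRemainder h ((a : ZMod (m * n)) - 1)).1 := by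
      rw [e1, map_sub, Prod.fst_sub]; simp
    have hsub2 : ((e a).2 : ZMod n) - 1
        = (ZMod.chineseRemainder h ((a : ZMod (m * n)) - 1)).2 := by
      rw [e2, map_sub, Prod.snd_sub]; simp
    rw [hsub1, hsub2, gcd_val_chinese h ((a : ZMod (m * n)) - 1), Nat.cast_mul,
      div_mul_div_comm, one_mul]
  rw [Finset.sum_congr rfl (fun a _ => key a)]
  exact (Fintype.sum_equiv e.toEquiv _
      (fun b : (ZMod m)ˣ × (ZMod n)ˣ =>
        ((1 : ℚ) / (Nat.gcd (((b.1 : ZMod m) - 1).val) m : ℚ)) *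
          ((1 : ℚ) / (Nat.gcd (((b.2 : ZMod n) - 1).val) n : ℚ)))
      (fun a => rfl)).trans
    (by rw [Fintype.sum_prod_type, Finset.sum_mul_sum])

private lemma sum_prime (p : ℕ) (hp : p.Prime) :
    haveI : NeZero p := ⟨hp.ne_zero⟩
    ∑ a : (ZMod p)ˣ, (1 : ℚ) / (Nat.gcd (((a : ZMod p) - 1).val) p : ℚ) =
      (Nat.totient p : ℚ) ^ 2 / p := by
  haveI : NeZero p := ⟨hp.ne_zero⟩
  haveI : Fact p.Prime := ⟨hp⟩
  rw [Finset.sum_eq_sum_sdiff_singleton_add (Finset.mem_univ (1 : (ZMod p)ˣ))]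
  have key : ∀ a ∈ Finset.univ \ {(1 : (ZMod p)ˣ)},
      (1 : ℚ) / (Nat.gcd (((a : ZMod p) - 1).val) p : ℚ) = 1 := by
    intro a ha
    have ha' : a ≠ 1 := by simpa using ha
    have h1 : ((a : ZMod p) - 1) ≠ 0 := by
      intro hc
      exact ha' (by ext; rwa [sub_eq_zero] at hc)
    have hv : (((a : ZMod p) - 1).val) ≠ 0 := by
      simpa [ZMod.val_eq_zero] using h1
    have hg : Nat.gcd (((a : ZMod p) - 1).val) p = 1 := by
      rw [Nat.gcd_comm]
      exact (Nat.Prime.coprime_iff_not_dvd hp).2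
        (Nat.not_dvd_of_pos_of_lt (Nat.pos_of_ne_zero hv) (ZMod.val_lt _))
    rw [hg]; norm_num
  rw [Finset.sum_congr rfl key, Finset.sum_const, Finset.card_sdiff_of_subset (Finset.subset_univ _),
    Finset.card_singleton, Finset.card_univ, ZMod.card_units_eq_totient,
    Nat.totient_prime hp]
  simp only [Units.val_one, sub_self, ZMod.val_zero, Nat.gcd_zero_left, nsmul_eq_mul, mul_one,
    Nat.totient_prime hp]
  have h2 : (2 : ℕ) ≤ p := hp.two_le
  have hp0 : (p : ℚ) ≠ 0 := Nat.cast_ne_zero.2 hp.ne_zero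
  push_cast [Nat.cast_sub h2, Nat.cast_sub hp.one_le]
  field_simp
  rw [show p - 1 - 1 = p - 2 from by omega, Nat.cast_sub h2]
  push_cast
  ring

private lemma key_lemma : ∀ d : ℕ, Squarefree d → ∀ [NeZero d],
    ∑ a : (ZMod d)ˣ, (1 : ℚ) / (Nat.gcd (((a : ZMod d) - 1).val) d : ℚ) =
      (Nat.totient d : ℚ) ^ 2 / d := by
  intro d
  induction d using Nat.recOnPosPrimePosCoprime with
  | prime_pow p k hpp hk =>
    intro hsq
    have hk1 : k = 1 := by
      by_contra hne
      have h2 : 2 ≤ k := by omega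
      have hdvd : p * p ∣ p ^ k := by
        have : p ^ 2 ∣ p ^ k := pow_dvd_pow p h2
        rwa [sq] at this
      exact hpp.one_lt.ne' (Nat.isUnit_iff.mp (hsq p hdvd))
    subst hk1
    rw [pow_one]
    intro _
    exact sum_prime p hpp
  | zero =>
    intro _ h
    exact absurd rfl (NeZero.ne 0)
  | one =>
    intro _ _
    have : ∀ a : (ZMod 1)ˣ, (1 : ℚ) / (Nat.gcd (((a : ZMod 1) - 1).val) 1 : ℚ) = 1 := by
      intro a
      simp
    rw [Finset.sum_congr rfl (fun a _ => this a), Finset.sum_const, Finset.card_univ]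
    simp
  | coprime a b ha hb hab iha ihb =>
    intro hsq _
    haveI : NeZero a := ⟨by omega⟩
    haveI : NeZero b := ⟨by omega⟩
    have hsa : Squarefree a := hsq.squarefree_of_dvd ⟨b, rfl⟩
    have hsb : Squarefree b := hsq.squarefree_of_dvd ⟨a, mul_comm a b⟩
    rw [sum_coprime a b hab, iha hsa, ihb hsb, Nat.totient_mul hab]
    have ha0 : (a : ℚ) ≠ 0 := Nat.cast_ne_zero.2 (by omega)
    have hb0 : (b : ℚ) ≠ 0 := Nat.cast_ne_zero.2 (by omega)
    push_cast
    field_simp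

/-- For every squarefree `d ≥ 1`,
`Σ_{a ∈ (ℤ/dℤ)^×} 1/gcd(ã − 1, d) = φ(d)²/d` as rational numbers. -/
theorem sum_inv_gcd_sub_one_eq_totient_sq_div (d : ℕ) [NeZero d] (hd : Squarefree d) :
    ∑ a : (ZMod d)ˣ, (1 : ℚ) / (Nat.gcd (((a : ZMod d) - 1).val) d : ℚ) =
      (Nat.totient d : ℚ) ^ 2 / d := by
  exact key_lemma d hd
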